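/- For any γ ∈ Γ with γ ≠ 0 and any finitely supported family (f_{0,1,δ})_{δ∈Γ} in F satisfying 2(γ²−α²) f_{0,1,γ} = (γ+2α)² f_{0,1,α+γ} + (γ−2α)² f_{0,1,γ−α} for all α ∈ Γ, one has f_{0,1,γ} = 0. -/
import Mathlib


/-- if `Γ` is an infinite additive subgroup of `F` with `1 ∈ Γ`,
`f : Γ → F` is finitely supported and satisfies
`2(γ²−α²) f(γ) = (γ+2α)² f(α+γ) + (γ−2α)² f(γ−α)` for all `α` and all `γ ≠ 0`,
then `f(γ) = 0` for every `γ ≠ 0`. -/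
theorem finitely_supported_relation_vanishes
    {F : Type*} [Field F] [CharZero F] (Γ : AddSubgroup F) (h1 : (1 : F) ∈ Γ)
    (hinf : (Γ : Set F).Infinite)
    (f : Γ → F) (hfin : (Function.support f).Finite)
    (hrel : ∀ (α γ : Γ), γ ≠ 0 →
      2 * ((γ : F) ^ 2 - (α : F) ^ 2) * f γ =
        ((γ : F) + 2 * α) ^ 2 * f (α + γ) + ((γ : F) - 2 * α) ^ 2 * f (γ - α)) :
    ∀ γ : Γ, γ ≠ 0 → f γ = 0 := by
  intro γ hγ
  have hinst : Infinite Γ := hinf.to_subtype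
  set T : Set Γ := ((fun s => s - γ) '' Function.support f) ∪
      ((fun s => γ - s) '' Function.support f) ∪ {γ, -γ} with hT
  have hTfin : T.Finite :=
    ((hfin.image _).union (hfin.image _)).union
      ((Set.finite_singleton _).insert _)
  obtain ⟨α, hα⟩ := hTfin.infinite_compl.nonempty
  simp only [hT, Set.mem_compl_iff, Set.mem_union, Set.mem_image,
    Set.mem_insert_iff, Set.mem_singleton_iff, not_or, not_exists, not_and] at hα
  obtain ⟨⟨h2, h3⟩, h4, h5⟩ := hα
  have hf1 : f (α + γ) = 0 := by
    by_contra h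
    exact h2 (α + γ) h (by abel)
  have hf2 : f (γ - α) = 0 := by
    by_contra h
    exact h3 (γ - α) h (by abel)
  have key := hrel α γ hγ
  rw [hf1, hf2] at key
  have hne1 : (γ : F) - (α : F) ≠ 0 := by
    intro h
    apply h4
    apply Subtype.ext
    show (α : F) = (γ : F)
    exact (sub_eq_zero.mp h).symm
  have hne2 : (γ : F) + (α : F) ≠ 0 := by
    intro h
    apply h5
    apply Subtype.ext
    show (α : F) = ((-γ : Γ) : F)
    push_cast
    exact eq_neg_of_add_eq_zero_right h
  have hcoef : (2 : F) * ((γ : F) ^ 2 - (α : F) ^ 2) ≠ 0 := by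
    have : ((γ : F) ^ 2 - (α : F) ^ 2) = ((γ : F) - α) * ((γ : F) + α) := by ring
    rw [this]
    exact mul_ne_zero two_ne_zero (mul_ne_zero hne1 hne2)
  have : 2 * ((γ : F) ^ 2 - (α : F) ^ 2) * f γ = 0 := by
    rw [key]; ring
  exact (mul_eq_zero.mp this).resolve_left hcoef
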